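/- For any positive integers d, u, z, and n with k = d + u ≤ n, there exists a t × n binary matrix that is (n, d, u; z]-disjunct with t = z · (k/u)^u · (k/d)^d · [1 + k(1 + ln(n/k + 1))] rows, where a t × n binary matrix M is (n, d, u; z]-disjunct if for any two disjoint subsets S₁, S₂ ⊂ [n] with |S₁| = d and |S₂| = u, there exist at least z rows in which all columns in S₂ have a 1 while all columns in S₁ have a 0. -/

import Mathlib

open Finset Nat

def GoodRow {n : ℕ} (v : Fin n → Bool) (p : Finset (Fin n) × Finset (Fin n)) : Prop :=
  (∀ j ∈ p.2, v j = true) ∧ (∀ j ∈ p.1, v j = false)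

instance {n : ℕ} (v : Fin n → Bool) (p : Finset (Fin n) × Finset (Fin n)) :
    Decidable (GoodRow v p) := by
  unfold GoodRow; infer_instance

lemma card_good_rows {n d u : ℕ} (hk : d + u ≤ n)
    (p : Finset (Fin n) × Finset (Fin n)) (hdisj : Disjoint p.1 p.2)
    (h1 : p.1.card = d) (h2 : p.2.card = u) :
    u ^ u * d ^ d * (d + u) ^ (n - (d + u)) ≤
      (univ.filter (fun w : Fin n → Fin (d + u) =>
        GoodRow (fun j => decide ((w j : ℕ) < u)) p)).card := by
  classical
  set k := d + u with hkdef
  -- capacity function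
  set c : Fin n → ℕ := fun j => if j ∈ p.2 then u else if j ∈ p.1 then d else k with hc
  -- the injection
  have hphibound : ∀ (x : ∀ j, Fin (c j)) (j : Fin n),
      (if j ∈ p.2 then ((x j : ℕ)) else if j ∈ p.1 then u + (x j : ℕ) else (x j : ℕ)) < k := by
    intro x j
    have hlt := (x j).isLt
    simp only [hc] at hlt
    split_ifs at hlt ⊢ <;> omega
  set phi : (∀ j, Fin (c j)) → (Fin n → Fin k) := fun x j =>
    ⟨if j ∈ p.2 then ((x j : ℕ)) else if j ∈ p.1 then u + (x j : ℕ) else (x j : ℕ),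
      hphibound x j⟩ with hphi
  have hphiinj : Function.Injective phi := by
    intro x y hxy
    funext j
    have hval : (if j ∈ p.2 then ((x j : ℕ)) else if j ∈ p.1 then u + (x j : ℕ) else (x j : ℕ))
        = (if j ∈ p.2 then ((y j : ℕ)) else if j ∈ p.1 then u + (y j : ℕ) else (y j : ℕ)) :=
      congrArg Fin.val (congrFun hxy j)
    split_ifs at hval <;> exact Fin.val_injective (by omega)
  have hphigood : ∀ x, GoodRow (fun j => decide (((phi x j : Fin k) : ℕ) < u)) p := by
    intro x
    constructor
    · intro j hj
      have hlt := (x j).isLt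
      simp only [hc, if_pos hj] at hlt
      simp only [hphi, if_pos hj]
      simpa using hlt
    · intro j hj
      have hj2 : j ∉ p.2 := Finset.disjoint_left.mp hdisj hj
      simp only [hphi, if_neg hj2, if_pos hj]
      simp
  -- counting
  have hcardpi : Fintype.card (∀ j, Fin (c j)) = u ^ u * d ^ d * k ^ (n - k) := by
    rw [Fintype.card_pi]
    simp only [Fintype.card_fin]
    have hsub2 : p.2 ⊆ univ := subset_univ _
    rw [← Finset.prod_sdiff hsub2]
    have hsub1 : p.1 ⊆ univ \ p.2 := fun j hj =>
      Finset.mem_sdiff.2 ⟨mem_univ _, Finset.disjoint_left.mp hdisj hj⟩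
    rw [← Finset.prod_sdiff hsub1]
    have e2 : ∏ j ∈ p.2, c j = u ^ u := by
      have : ∏ j ∈ p.2, c j = ∏ _j ∈ p.2, u :=
        Finset.prod_congr rfl (fun j hj => by simp only [hc, if_pos hj])
      rw [this, Finset.prod_const, h2]
    have e1 : ∏ j ∈ p.1, c j = d ^ d := by
      have : ∏ j ∈ p.1, c j = ∏ _j ∈ p.1, d :=
        Finset.prod_congr rfl (fun j hj => by
          simp only [hc, if_neg (Finset.disjoint_left.mp hdisj hj), if_pos hj])
      rw [this, Finset.prod_const, h1]
    have e0 : ∏ j ∈ (univ \ p.2) \ p.1, c j = k ^ (n - k) := by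
      have : ∏ j ∈ (univ \ p.2) \ p.1, c j = ∏ _j ∈ (univ \ p.2) \ p.1, k :=
        Finset.prod_congr rfl (fun j hj => by
          have hj' := Finset.mem_sdiff.1 hj
          have hj2 := (Finset.mem_sdiff.1 hj'.1).2
          simp only [hc, if_neg hj2, if_neg hj'.2])
      rw [this, Finset.prod_const]
      congr 1
      rw [Finset.card_sdiff_of_subset hsub1, Finset.card_sdiff_of_subset hsub2, h1, h2]
      simp only [Finset.card_univ, Fintype.card_fin, hkdef]
      omega
    rw [e2, e1, e0]
    ring
  -- assemble
  have hinj2 : Function.Injective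
      (fun x : (∀ j, Fin (c j)) =>
        (⟨phi x, hphigood x⟩ : {w : Fin n → Fin k // GoodRow (fun j => decide ((w j : ℕ) < u)) p})) := by
    intro x y hxy
    exact hphiinj (congrArg Subtype.val hxy)
  have hcardle := Fintype.card_le_of_injective _ hinj2
  rw [hcardpi] at hcardle
  rwa [Fintype.card_subtype] at hcardle

lemma exists_good_row {n d u : ℕ} (hd : 0 < d) (hu : 0 < u) (hk : d + u ≤ n)
    (S : Finset (Finset (Fin n) × Finset (Fin n)))
    (hS : ∀ p ∈ S, Disjoint p.1 p.2 ∧ p.1.card = d ∧ p.2.card = u) :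
    ∃ v : Fin n → Bool,
      S.card * (u ^ u * d ^ d) ≤
        (S.filter (fun p => GoodRow v p)).card * (d + u) ^ (d + u) := by
  classical
  set k := d + u with hkdef
  have hkpos : 0 < k := by omega
  set row : (Fin n → Fin k) → (Fin n → Bool) := fun w j => decide ((w j : ℕ) < u) with hrow
  -- double counting
  have hsum : ∑ w : Fin n → Fin k, (S.filter (fun p => GoodRow (row w) p)).card
      = ∑ p ∈ S, (univ.filter (fun w : Fin n → Fin k => GoodRow (row w) p)).card := by
    simp only [Finset.card_filter]
    rw [Finset.sum_comm]
  have hlower : S.card * (u ^ u * d ^ d * k ^ (n - k)) ≤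
      ∑ w : Fin n → Fin k, (S.filter (fun p => GoodRow (row w) p)).card := by
    rw [hsum]
    calc S.card * (u ^ u * d ^ d * k ^ (n - k))
        = ∑ _p ∈ S, u ^ u * d ^ d * k ^ (n - k) := by rw [Finset.sum_const, smul_eq_mul]
      _ ≤ _ := Finset.sum_le_sum (fun p hp => by
          obtain ⟨h1, h2, h3⟩ := hS p hp
          exact card_good_rows hk p h1 h2 h3)
  -- pigeonhole
  have hΩcard : (univ : Finset (Fin n → Fin k)).card = k ^ n := by
    rw [Finset.card_univ, Fintype.card_fun]
    simp
  have : Nonempty (Fin n → Fin k) := ⟨fun _ => ⟨0, hkpos⟩⟩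
  have hne : (univ : Finset (Fin n → Fin k)).Nonempty := univ_nonempty
  have hpig : ∃ w : Fin n → Fin k,
      S.card * (u ^ u * d ^ d * k ^ (n - k)) ≤
        (S.filter (fun p => GoodRow (row w) p)).card * k ^ n := by
    have h := Finset.exists_le_of_sum_le (s := (univ : Finset (Fin n → Fin k)))
      (f := fun _ => S.card * (u ^ u * d ^ d * k ^ (n - k)))
      (g := fun w => (S.filter (fun p => GoodRow (row w) p)).card * k ^ n)
      hne ?_
    · obtain ⟨w, _, hw⟩ := h
      exact ⟨w, hw⟩
    · rw [Finset.sum_const, hΩcard, smul_eq_mul, ← Finset.sum_mul, mul_comm]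
      exact Nat.mul_le_mul_right _ hlower
  obtain ⟨w, hw⟩ := hpig
  refine ⟨row w, ?_⟩
  -- cancel k^(n-k)
  have hkn : k ^ n = k ^ k * k ^ (n - k) := by
    rw [← pow_add]
    congr 1
    omega
  rw [hkn] at hw
  have h3 : S.card * (u ^ u * d ^ d) * k ^ (n - k)
      ≤ (S.filter (fun p => GoodRow (row w) p)).card * k ^ k * k ^ (n - k) := by
    calc S.card * (u ^ u * d ^ d) * k ^ (n - k)
        = S.card * (u ^ u * d ^ d * k ^ (n - k)) := by ring
      _ ≤ (S.filter (fun p => GoodRow (row w) p)).card * (k ^ k * k ^ (n - k)) := hw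
      _ = (S.filter (fun p => GoodRow (row w) p)).card * k ^ k * k ^ (n - k) := by ring
  exact Nat.le_of_mul_le_mul_right h3 (pow_pos hkpos (n - k))

lemma cover_lemma {n d u : ℕ} (hd : 0 < d) (hu : 0 < u) (hk : d + u ≤ n) (m : ℕ) :
    ∀ S : Finset (Finset (Fin n) × Finset (Fin n)),
      (∀ p ∈ S, Disjoint p.1 p.2 ∧ p.1.card = d ∧ p.2.card = u) →
      (S.card : ℝ) * ((u : ℝ) ^ u * (d : ℝ) ^ d) ≤ ((d : ℝ) + u) ^ (d + u) *
        Real.exp ((u : ℝ) ^ u * (d : ℝ) ^ d / ((d : ℝ) + u) ^ (d + u) * m) →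
      ∃ M : Fin (m + (d + u) ^ (d + u) / (u ^ u * d ^ d)) → Fin n → Bool,
        ∀ p ∈ S, ∃ i, GoodRow (M i) p := by
  have hA : (0:ℝ) < (u : ℝ) ^ u * (d : ℝ) ^ d := by positivity
  have hK : (0:ℝ) < ((d : ℝ) + u) ^ (d + u) := by positivity
  have hAK : (u : ℝ) ^ u * (d : ℝ) ^ d ≤ ((d : ℝ) + u) ^ (d + u) := by
    rw [pow_add]
    have h1 : (d : ℝ) ^ d ≤ ((d : ℝ) + u) ^ d :=
      pow_le_pow_left₀ (by positivity) (by linarith [Nat.cast_nonneg (α := ℝ) u]) _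
    have h2 : (u : ℝ) ^ u ≤ ((d : ℝ) + u) ^ u :=
      pow_le_pow_left₀ (by positivity) (by linarith [Nat.cast_nonneg (α := ℝ) d]) _
    calc (u : ℝ) ^ u * (d : ℝ) ^ d ≤ ((d : ℝ) + u) ^ u * ((d : ℝ) + u) ^ d :=
          mul_le_mul h2 h1 (by positivity) (by positivity)
      _ = _ := by ring
  induction m with
  | zero =>
    intro S hS hle
    have h0 : S.card ≤ (d + u) ^ (d + u) / (u ^ u * d ^ d) := by
      have hApos : 0 < u ^ u * d ^ d := by positivity
      rw [Nat.le_div_iff_mul_le hApos]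
      rw [Nat.cast_zero, mul_zero, Real.exp_zero, mul_one] at hle
      exact_mod_cast hle
    refine ⟨fun i => if h : (i : ℕ) < S.card
      then (fun j => decide (j ∈ (S.equivFin.symm ⟨(i : ℕ), h⟩).1.2)) else fun _ => false, ?_⟩
    intro p hp
    set i0 := S.equivFin ⟨p, hp⟩ with hi0
    have hlt : (i0 : ℕ) < S.card := i0.isLt
    refine ⟨⟨(i0 : ℕ), by omega⟩, ?_⟩
    show GoodRow (if h : (i0 : ℕ) < S.card
      then (fun j => decide (j ∈ (S.equivFin.symm ⟨(i0 : ℕ), h⟩).1.2)) else fun _ => false) p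
    rw [dif_pos hlt]
    have he : (⟨(i0 : ℕ), hlt⟩ : Fin S.card) = i0 := rfl
    rw [he, hi0, Equiv.symm_apply_apply]
    obtain ⟨hdisj, -, -⟩ := hS p hp
    constructor
    · intro j hj; simp [hj]
    · intro j hj; simp [Finset.disjoint_left.mp hdisj hj]
  | succ m ih =>
    intro S hS hle
    rcases S.eq_empty_or_nonempty with rfl | hne
    · exact ⟨fun _ _ => false, by simp⟩
    obtain ⟨v, hv⟩ := exists_good_row hd hu hk S hS
    set C := (S.filter (fun p => GoodRow v p)).card with hCdef
    set S' := S.filter (fun p => ¬ GoodRow v p) with hS'def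
    have hsplit : C + S'.card = S.card := Finset.card_filter_add_card_filter_not _
    -- analytic bound for S'
    have hS'le : (S'.card : ℝ) * ((u : ℝ) ^ u * (d : ℝ) ^ d) ≤ ((d : ℝ) + u) ^ (d + u) *
        Real.exp ((u : ℝ) ^ u * (d : ℝ) ^ d / ((d : ℝ) + u) ^ (d + u) * m) := by
      set A := (u : ℝ) ^ u * (d : ℝ) ^ d with hAdef
      set K := ((d : ℝ) + u) ^ (d + u) with hKdef
      set q := A / K with hq
      have hq0 : 0 ≤ q := by positivity
      have hq1 : q ≤ 1 := by rw [hq, div_le_one hK]; exact hAK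
      have hvr : (S.card : ℝ) * A ≤ (C : ℝ) * K := by
        rw [hAdef, hKdef]; exact_mod_cast hv
      have hS'r : (S'.card : ℝ) = (S.card : ℝ) - C := by
        have := hsplit; push_cast [← this]; ring
      have hCA : (S.card : ℝ) * A * q ≤ (C : ℝ) * A := by
        calc (S.card : ℝ) * A * q ≤ ((C : ℝ) * K) * q :=
              mul_le_mul_of_nonneg_right hvr hq0
          _ = (C : ℝ) * A := by rw [hq]; field_simp
      have hexp : Real.exp ((u : ℝ) ^ u * (d : ℝ) ^ d / ((d : ℝ) + u) ^ (d + u) * ((m : ℕ) + 1 : ℕ))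
          * (1 - q) ≤ Real.exp (q * m) := by
        have h1 : 1 - q ≤ Real.exp (-q) := by
          have := Real.add_one_le_exp (-q); linarith
        calc Real.exp (q * ((m : ℕ) + 1 : ℕ)) * (1 - q)
            ≤ Real.exp (q * ((m : ℕ) + 1 : ℕ)) * Real.exp (-q) := by
              apply mul_le_mul_of_nonneg_left h1 (Real.exp_nonneg _)
          _ = Real.exp (q * m) := by
              rw [← Real.exp_add]; congr 1; push_cast; ring
      calc (S'.card : ℝ) * A = (S.card : ℝ) * A - (C : ℝ) * A := by rw [hS'r]; ring
        _ ≤ (S.card : ℝ) * A - (S.card : ℝ) * A * q := by linarith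
        _ = ((S.card : ℝ) * A) * (1 - q) := by ring
        _ ≤ (K * Real.exp (q * ((m : ℕ) + 1 : ℕ))) * (1 - q) := by
            apply mul_le_mul_of_nonneg_right _ (by linarith)
            exact_mod_cast hle
        _ = K * (Real.exp (q * ((m : ℕ) + 1 : ℕ)) * (1 - q)) := by ring
        _ ≤ K * Real.exp (q * m) := by
            apply mul_le_mul_of_nonneg_left _ (le_of_lt hK)
            exact hexp
    obtain ⟨M', hM'⟩ := ih S' (fun p hp => hS p (Finset.mem_of_mem_filter p hp)) hS'le
    refine ⟨fun i => if h : (i : ℕ) = 0 then v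
      else M' ⟨(i : ℕ) - 1, by have := i.isLt; omega⟩, ?_⟩
    intro p hp
    by_cases hgood : GoodRow v p
    · refine ⟨⟨0, Nat.lt_of_lt_of_le m.succ_pos (Nat.le_add_right _ _)⟩, ?_⟩
      simpa using hgood
    · obtain ⟨i', hi'⟩ := hM' p (Finset.mem_filter.2 ⟨hp, hgood⟩)
      refine ⟨⟨(i' : ℕ) + 1, by have := i'.isLt; omega⟩, ?_⟩
      show GoodRow (if h : ((i' : ℕ) + 1) = 0 then v
        else M' ⟨((i' : ℕ) + 1) - 1, by have := i'.isLt; omega⟩) p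
      rw [dif_neg (Nat.succ_ne_zero _)]
      have he : (⟨((i' : ℕ) + 1) - 1, by have := i'.isLt; omega⟩ : Fin (m + (d + u) ^ (d + u) / (u ^ u * d ^ d))) = i' := by
        apply Fin.ext; simp
      rw [he]
      exact hi'

lemma two_mul_pow_le_exp_mul_factorial (d : ℕ) (hd : 0 < d) :
    2 * (d : ℝ) ^ d ≤ Real.exp d * (d ! : ℝ) := by
  obtain ⟨e, rfl⟩ : ∃ e, d = e + 1 := ⟨d - 1, by omega⟩
  have h := Real.sum_le_exp_of_nonneg (by positivity : (0:ℝ) ≤ ((e+1 : ℕ) : ℝ)) (e + 2)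
  have hsub : ({e, e+1} : Finset ℕ) ⊆ Finset.range (e + 2) := by
    intro x hx; simp at hx; rcases hx with rfl | rfl <;> simp [Finset.mem_range] <;> omega
  have hpair : ∑ i ∈ ({e, e+1} : Finset ℕ), ((e+1:ℕ) : ℝ) ^ i / i ! ≤
      ∑ i ∈ Finset.range (e + 2), ((e+1:ℕ) : ℝ) ^ i / i ! := by
    apply Finset.sum_le_sum_of_subset_of_nonneg hsub
    intro i _ _; positivity
  rw [Finset.sum_pair (by omega : e ≠ e + 1)] at hpair
  have hterm : ((e+1:ℕ) : ℝ) ^ e / (e ! : ℝ) = ((e+1:ℕ):ℝ) ^ (e+1) / ((e+1)! : ℝ) := by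
    rw [Nat.factorial_succ]
    push_cast
    rw [pow_succ]
    have he : (0:ℝ) < (e ! : ℝ) := by positivity
    field_simp
  have h2 : 2 * ((e+1:ℕ) : ℝ) ^ (e+1) / ((e+1)! : ℝ) ≤ Real.exp ((e+1:ℕ):ℝ) := by
    calc 2 * ((e+1:ℕ) : ℝ) ^ (e+1) / ((e+1)! : ℝ)
        = ((e+1:ℕ) : ℝ) ^ e / (e ! : ℝ) + ((e+1:ℕ):ℝ) ^ (e+1) / ((e+1)! : ℝ) := by
          rw [hterm]; ring
      _ ≤ _ := le_trans hpair h
  have hfac : (0:ℝ) < ((e+1)! : ℝ) := by positivity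
  rw [div_le_iff₀ hfac] at h2
  calc 2 * ((e+1:ℕ) : ℝ) ^ (e+1) ≤ Real.exp ((e+1:ℕ):ℝ) * ((e+1)! : ℝ) := by
        rw [mul_comm (Real.exp _)]; exact h2.trans_eq (mul_comm _ _)
    _ = _ := by norm_cast

/-- A `t × n` binary matrix `M` is `(n, d, u; z]`-disjunct if for any two disjoint
subsets `S₁, S₂ ⊆ [n]` with `|S₁| = d` and `|S₂| = u`, there exist at least `z` rows
in which all columns of `S₂` have a `1` while all columns of `S₁` have a `0`. -/
def IsDisjunct {t n : ℕ} (M : Fin t → Fin n → Bool) (d u z : ℕ) : Prop :=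
  ∀ S₁ S₂ : Finset (Fin n), Disjoint S₁ S₂ → S₁.card = d → S₂.card = u →
    z ≤ (Finset.univ.filter
      (fun i => (∀ j ∈ S₂, M i j = true) ∧ (∀ j ∈ S₁, M i j = false))).card

theorem exists_disjunct_matrix_chen
    (d u z n : ℕ) (hd : 0 < d) (hu : 0 < u) (hz : 0 < z) (hk : d + u ≤ n) :
    ∃ (t : ℕ) (M : Fin t → Fin n → Bool), IsDisjunct M d u z ∧
      (t : ℝ) ≤ (z : ℝ) * (((d : ℝ) + u) / u) ^ u * (((d : ℝ) + u) / d) ^ d *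
        (1 + ((d : ℝ) + u) * (1 + Real.log ((n : ℝ) / ((d : ℝ) + u) + 1))) := by
  classical
  set A : ℝ := (u : ℝ) ^ u * (d : ℝ) ^ d with hAdef
  set K : ℝ := ((d : ℝ) + u) ^ (d + u) with hKdef
  set kR : ℝ := (d : ℝ) + u with hkRdef
  set L : ℝ := Real.log ((n : ℝ) / ((d : ℝ) + u) + 1) with hLdef
  have hA : (0:ℝ) < A := by rw [hAdef]; positivity
  have hkRpos : (0:ℝ) < kR := by rw [hkRdef]; positivity
  have hK : (0:ℝ) < K := by rw [hKdef]; positivity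
  have hAK : A ≤ K := by
    rw [hAdef, hKdef, pow_add]
    have h1 : (d : ℝ) ^ d ≤ ((d : ℝ) + u) ^ d :=
      pow_le_pow_left₀ (by positivity) (by linarith [Nat.cast_nonneg (α := ℝ) u]) _
    have h2 : (u : ℝ) ^ u ≤ ((d : ℝ) + u) ^ u :=
      pow_le_pow_left₀ (by positivity) (by linarith [Nat.cast_nonneg (α := ℝ) d]) _
    calc (u : ℝ) ^ u * (d : ℝ) ^ d ≤ ((d : ℝ) + u) ^ u * ((d : ℝ) + u) ^ d :=
          mul_le_mul h2 h1 (by positivity) (by positivity)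
      _ = _ := by ring
  have hL : 0 ≤ L := by
    rw [hLdef]
    apply Real.log_nonneg
    have : 0 ≤ (n : ℝ) / ((d : ℝ) + u) := by positivity
    linarith
  set x₀ : ℝ := K / A * (kR * (1 + L)) with hx₀def
  have hx₀ : 0 ≤ x₀ := by
    rw [hx₀def]
    have : 0 ≤ 1 + L := by linarith
    positivity
  set m : ℕ := ⌊x₀⌋₊ with hmdef
  set t₂ : ℕ := (d + u) ^ (d + u) / (u ^ u * d ^ d) with ht₂def
  set T₀ : ℕ := m + t₂ with hT₀def
  -- the set of all pairs
  set S₀ : Finset (Finset (Fin n) × Finset (Fin n)) :=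
    univ.filter (fun p => Disjoint p.1 p.2 ∧ p.1.card = d ∧ p.2.card = u) with hS₀def
  have hS₀prop : ∀ p ∈ S₀, Disjoint p.1 p.2 ∧ p.1.card = d ∧ p.2.card = u := by
    intro p hp
    exact (Finset.mem_filter.1 hp).2
  -- cardinality bound
  have hcard : S₀.card ≤ n.choose d * n.choose u := by
    have hsub : S₀ ⊆ (univ.powersetCard d) ×ˢ (univ.powersetCard u) := by
      intro p hp
      obtain ⟨hdisj, h1, h2⟩ := (Finset.mem_filter.1 hp).2
      rw [Finset.mem_product]
      constructor <;> rw [Finset.mem_powersetCard]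
      · exact ⟨subset_univ _, h1⟩
      · exact ⟨subset_univ _, h2⟩
    have := Finset.card_le_card hsub
    rwa [Finset.card_product, Finset.card_powersetCard, Finset.card_powersetCard,
      Finset.card_univ, Fintype.card_fin] at this
  -- factorial bounds
  have hdfac : ((d:ℝ)) ^ d / (d ! : ℝ) ≤ Real.exp d / 2 := by
    rw [div_le_div_iff₀ (by positivity) (by norm_num)]
    have := two_mul_pow_le_exp_mul_factorial d hd
    linarith
  have hufac : ((u:ℝ)) ^ u / (u ! : ℝ) ≤ Real.exp u / 2 := by
    rw [div_le_div_iff₀ (by positivity) (by norm_num)]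
    have := two_mul_pow_le_exp_mul_factorial u hu
    linarith
  have hc1 : (S₀.card : ℝ) ≤ ((n:ℝ) ^ d / (d ! : ℝ)) * ((n:ℝ) ^ u / (u ! : ℝ)) := by
    have h1 : (S₀.card : ℝ) ≤ (n.choose d : ℝ) * (n.choose u : ℝ) := by exact_mod_cast hcard
    exact h1.trans (mul_le_mul (Nat.choose_le_pow_div d n) (Nat.choose_le_pow_div u n)
      (by positivity) (by positivity))
  have hmain : (S₀.card : ℝ) * A ≤ (n:ℝ) ^ (d + u) * Real.exp kR / 4 := by
    have hstep := mul_le_mul_of_nonneg_right hc1 (le_of_lt hA)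
    refine hstep.trans ?_
    have hd0 : (d ! : ℝ) ≠ 0 := by positivity
    have hu0 : (u ! : ℝ) ≠ 0 := by positivity
    have e1 : ((n:ℝ) ^ d / (d ! : ℝ)) * ((n:ℝ) ^ u / (u ! : ℝ)) * A
        = (n:ℝ) ^ (d + u) * (((d:ℝ) ^ d / (d ! : ℝ)) * ((u:ℝ) ^ u / (u ! : ℝ))) := by
      rw [hAdef, pow_add]
      field_simp
      try ring
      try simp
    rw [e1]
    have h2 : ((d:ℝ) ^ d / (d ! : ℝ)) * ((u:ℝ) ^ u / (u ! : ℝ))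
        ≤ (Real.exp d / 2) * (Real.exp u / 2) :=
      mul_le_mul hdfac hufac (by positivity) (by positivity)
    calc (n:ℝ) ^ (d + u) * (((d:ℝ) ^ d / (d ! : ℝ)) * ((u:ℝ) ^ u / (u ! : ℝ)))
        ≤ (n:ℝ) ^ (d + u) * ((Real.exp d / 2) * (Real.exp u / 2)) :=
          mul_le_mul_of_nonneg_left h2 (by positivity)
      _ = (n:ℝ) ^ (d + u) * Real.exp kR / 4 := by
          have hee : Real.exp ((d:ℝ)) * Real.exp ((u:ℝ)) = Real.exp ((d:ℝ) + (u:ℝ)) :=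
            (Real.exp_add _ _).symm
          rw [hkRdef, ← hee]; ring
  -- the exponent bound
  have hqm : kR * (1 + L) - 1 ≤ A / K * m := by
    have hfloor : x₀ - 1 < (m : ℝ) := by
      rw [hmdef]
      exact Nat.sub_one_lt_floor x₀
    have hmono : A / K * (x₀ - 1) ≤ A / K * m :=
      mul_le_mul_of_nonneg_left (le_of_lt hfloor) (by positivity)
    have hx : A / K * x₀ = kR * (1 + L) := by
      rw [hx₀def]
      field_simp
    have hAK1 : A / K ≤ 1 := by rw [div_le_one hK]; exact hAK
    have : A / K * (x₀ - 1) = kR * (1 + L) - A / K := by rw [mul_sub, hx]; ring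
    rw [this] at hmono
    linarith
  have hrhs : (n:ℝ) ^ (d + u) * Real.exp kR / 4 ≤ K * Real.exp (A / K * m) := by
    have hexpL : Real.exp L = (n : ℝ) / kR + 1 := by
      rw [hLdef, hkRdef, Real.exp_log (by positivity)]
    have hexpkL : Real.exp (kR * L) = ((n : ℝ) / kR + 1) ^ (d + u) := by
      have hcast : kR = ((d + u : ℕ) : ℝ) := by rw [hkRdef]; push_cast; ring
      rw [hcast, Real.exp_nat_mul, hexpL, hcast]
    have hKpow : K * ((n : ℝ) / kR + 1) ^ (d + u) = ((n : ℝ) + kR) ^ (d + u) := by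
      rw [hKdef, ← mul_pow]
      congr 1
      field_simp
    have hnle : (n:ℝ) ^ (d + u) ≤ ((n : ℝ) + kR) ^ (d + u) :=
      pow_le_pow_left₀ (by positivity) (by linarith) _
    have hexpsum : Real.exp (kR * L) * Real.exp kR = Real.exp (kR * (1 + L)) := by
      rw [← Real.exp_add]
      congr 1
      ring
    have hb : (n:ℝ) ^ (d + u) * Real.exp kR ≤ K * Real.exp (kR * (1 + L)) := by
      calc (n:ℝ) ^ (d + u) * Real.exp kR ≤ ((n : ℝ) + kR) ^ (d + u) * Real.exp kR :=
            mul_le_mul_of_nonneg_right hnle (Real.exp_nonneg _)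
        _ = K * (((n : ℝ) / kR + 1) ^ (d + u) * Real.exp kR) := by rw [← hKpow]; ring
        _ = K * (Real.exp (kR * L) * Real.exp kR) := by rw [hexpkL]
        _ = K * Real.exp (kR * (1 + L)) := by rw [hexpsum]
    have hexp4 : Real.exp 1 ≤ 4 := by
      have := Real.exp_one_lt_d9
      linarith
    calc (n:ℝ) ^ (d + u) * Real.exp kR / 4
        ≤ (n:ℝ) ^ (d + u) * Real.exp kR / Real.exp 1 := by
          apply div_le_div_of_nonneg_left (by positivity) (Real.exp_pos 1) hexp4
      _ ≤ K * Real.exp (kR * (1 + L)) / Real.exp 1 := by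
          gcongr
      _ = K * Real.exp (kR * (1 + L) - 1) := by rw [Real.exp_sub]; ring
      _ ≤ K * Real.exp (A / K * m) :=
          mul_le_mul_of_nonneg_left (Real.exp_le_exp.2 hqm) (le_of_lt hK)
  -- apply the covering lemma
  obtain ⟨M₀, hM₀⟩ := cover_lemma hd hu hk m S₀ hS₀prop (hmain.trans hrhs)
  have hnatAK : u ^ u * d ^ d ≤ (d + u) ^ (d + u) := by
    have h := hAK
    rw [hAdef, hKdef, hkRdef] at h
    exact_mod_cast h
  have hApos : 0 < u ^ u * d ^ d := by positivity
  have ht₂pos : 0 < t₂ := by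
    rw [ht₂def]
    exact Nat.div_pos hnatAK hApos
  have hT₀pos : 0 < T₀ := by omega
  have hT₀pos' : 0 < m + (d + u) ^ (d + u) / (u ^ u * d ^ d) := hT₀pos
  refine ⟨z * T₀, fun i => M₀ ⟨(i : ℕ) % T₀, Nat.mod_lt _ hT₀pos'⟩, ?_, ?_⟩
  · -- IsDisjunct
    intro S₁ S₂ hdisj h1 h2
    have hp : (S₁, S₂) ∈ S₀ := by
      rw [hS₀def]
      exact Finset.mem_filter.2 ⟨Finset.mem_univ _, hdisj, h1, h2⟩
    obtain ⟨i₀, hi₀⟩ := hM₀ (S₁, S₂) hp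
    have hbound : ∀ j : Fin z, (i₀ : ℕ) + (j : ℕ) * T₀ < z * T₀ := by
      intro j
      calc (i₀ : ℕ) + (j : ℕ) * T₀ < T₀ + (j : ℕ) * T₀ := by
            have := i₀.isLt; omega
        _ = ((j : ℕ) + 1) * T₀ := by ring
        _ ≤ z * T₀ := Nat.mul_le_mul_right _ j.isLt
    have key : ∀ j : Fin z,
        (⟨((⟨(i₀ : ℕ) + (j : ℕ) * T₀, hbound j⟩ : Fin (z * T₀)) : ℕ) % T₀,
          Nat.mod_lt _ hT₀pos'⟩ : Fin (m + (d + u) ^ (d + u) / (u ^ u * d ^ d))) = i₀ := by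
      intro j
      apply Fin.ext
      show ((i₀ : ℕ) + (j : ℕ) * T₀) % T₀ = (i₀ : ℕ)
      rw [Nat.add_mul_mod_self_right]
      exact Nat.mod_eq_of_lt (by have := i₀.isLt; omega)
    have hmaps : ∀ j ∈ (univ : Finset (Fin z)),
        (⟨(i₀ : ℕ) + (j : ℕ) * T₀, hbound j⟩ : Fin (z * T₀)) ∈
          univ.filter (fun i : Fin (z * T₀) =>
            (∀ a ∈ S₂, M₀ ⟨(i : ℕ) % T₀, Nat.mod_lt _ hT₀pos'⟩ a = true) ∧
            (∀ a ∈ S₁, M₀ ⟨(i : ℕ) % T₀, Nat.mod_lt _ hT₀pos'⟩ a = false)) := by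
      intro j _
      refine Finset.mem_filter.2 ⟨Finset.mem_univ _, ?_⟩
      rw [key j]
      exact hi₀
    have hinjOn : Set.InjOn (fun j : Fin z => (⟨(i₀ : ℕ) + (j : ℕ) * T₀, hbound j⟩ : Fin (z * T₀)))
        ↑(univ : Finset (Fin z)) := by
      intro a _ b _ hab
      have hval : (i₀ : ℕ) + (a : ℕ) * T₀ = (i₀ : ℕ) + (b : ℕ) * T₀ :=
        congrArg Fin.val hab
      have : (a : ℕ) * T₀ = (b : ℕ) * T₀ := by omega
      exact Fin.ext (Nat.eq_of_mul_eq_mul_right hT₀pos this)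
    have hcardle := Finset.card_le_card_of_injOn _ hmaps hinjOn
    rw [Finset.card_univ, Fintype.card_fin] at hcardle
    exact hcardle
  · -- size bound
    have hm : (m : ℝ) ≤ x₀ := by rw [hmdef]; exact Nat.floor_le hx₀
    have ht2 : (t₂ : ℝ) ≤ K / A := by
      rw [ht₂def]
      calc (((d + u) ^ (d + u) / (u ^ u * d ^ d) : ℕ) : ℝ)
          ≤ (((d + u) ^ (d + u) : ℕ) : ℝ) / (((u ^ u * d ^ d : ℕ)) : ℝ) := Nat.cast_div_le
        _ = K / A := by rw [hAdef, hKdef, hkRdef]; push_cast; ring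
    have hTle : (T₀ : ℝ) ≤ K / A * (1 + kR * (1 + L)) := by
      have e : (T₀ : ℝ) = (m : ℝ) + (t₂ : ℝ) := by rw [hT₀def]; push_cast; ring
      rw [e]
      calc (m : ℝ) + (t₂ : ℝ) ≤ x₀ + K / A := add_le_add hm ht2
        _ = K / A * (1 + kR * (1 + L)) := by rw [hx₀def]; ring
    have hKA : (kR / (u : ℝ)) ^ u * (kR / (d : ℝ)) ^ d = K / A := by
      rw [div_pow, div_pow, _root_.div_mul_div_comm, ← pow_add, add_comm u d, hKdef, hAdef]
    calc ((z * T₀ : ℕ) : ℝ) = (z : ℝ) * (T₀ : ℝ) := by push_cast; ring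
      _ ≤ (z : ℝ) * (K / A * (1 + kR * (1 + L))) :=
          mul_le_mul_of_nonneg_left hTle (by positivity)
      _ = (z : ℝ) * (kR / (u : ℝ)) ^ u * (kR / (d : ℝ)) ^ d * (1 + kR * (1 + L)) := by
          rw [← hKA]; ring
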